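/- For every k ≥ 0 and ℓ ≥ 1, the number of occurrences of the pattern [1-2^ℓ) in the Peano word X_{2k+1} equals C(4^{2k}-2^{2k}, ℓ) + C(4^{2k}, ℓ) + C(4^{2k}+2^{2k}-1, ℓ). -/

import Mathlib

/-- φ1: reverse the word and apply 1↦4, 2↦1, 3↦2, 4↦3. -/
def phi1 (A : List ℕ) : List ℕ := A.reverse.map (fun x => if x = 1 then 4 else x - 1)

/-- φ2: reverse the word and apply 1↦2, 2↦3, 3↦4, 4↦1. -/
def phi2 (A : List ℕ) : List ℕ := A.reverse.map (fun x => if x = 4 then 1 else x + 1)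

/-- The Peano words: `peano 1 = 123`, `peano (n+1) = φ1(Xₙ) 1 Xₙ 2 Xₙ 3 φ2(Xₙ)`. -/
def peano : ℕ → List ℕ
  | 0 => []
  | 1 => [1, 2, 3]
  | n + 2 =>
      phi1 (peano (n + 1)) ++ [1] ++ peano (n + 1) ++ [2] ++ peano (n + 1)
        ++ [3] ++ phi2 (peano (n + 1))

/-- Number of rises of a word. -/
def rises (w : List ℕ) : ℕ := ((w.zip w.tail).filter (fun p => p.1 < p.2)).length

/-- Number of descents of a word. -/
def descents (w : List ℕ) : ℕ := ((w.zip w.tail).filter (fun p => p.2 < p.1)).length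

/-- Number of occurrences of the pattern `[1-2^ℓ)`: sets of `ℓ` positions, none of them
the first, at which the letters of `w` all coincide and are larger than the first letter. -/
def pat12Count (w : List ℕ) (ℓ : ℕ) : ℕ :=
  (Finset.univ.filter (fun s : Finset (Fin w.length) =>
    s.card = ℓ ∧ (∀ i ∈ s, 0 < (i : ℕ)) ∧ (∀ i ∈ s, ∀ j ∈ s, w.get i = w.get j) ∧
      ∀ i ∈ s, w.headI < w.get i)).card


lemma peano_mem (n : ℕ) : ∀ x ∈ peano n, x = 1 ∨ x = 2 ∨ x = 3 ∨ x = 4 := by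
  induction n using Nat.strong_induction_on with
  | _ n ih =>
    match n with
    | 0 => simp [peano]
    | 1 => intro x hx; simp [peano] at hx; omega
    | n + 2 =>
      intro x hx
      have IH := ih (n + 1) (by omega)
      simp only [peano, phi1, phi2, List.mem_append, List.mem_map, List.mem_reverse,
        List.mem_singleton] at hx
      rcases hx with ((((((⟨a, ha, rfl⟩ | rfl) | h) | rfl) | h) | rfl) | ⟨a, ha, rfl⟩)
      · rcases IH a ha with rfl | rfl | rfl | rfl <;> simp
      · simp
      · exact IH x h
      · simp
      · exact IH x h
      · simp
      · rcases IH a ha with rfl | rfl | rfl | rfl <;> simp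

lemma count_map_rev (f : ℕ → ℕ) (l : List ℕ) (a b : ℕ)
    (hab : ∀ x ∈ l, f x = a ↔ x = b) :
    (l.reverse.map f).count a = l.count b := by
  rw [List.count, List.countP_map, List.countP_reverse, List.count]
  apply List.countP_congr
  intro x hx
  simp only [Function.comp_apply, beq_iff_eq]
  exact hab x hx

lemma peano_counts (n : ℕ) :
    (peano (n + 2)).count 1 = 4 ^ (n + 1) ∧
    (peano (n + 2)).count 2 = 4 ^ (n + 1) + 2 ^ (n + 1) - 1 ∧
    (peano (n + 2)).count 3 = 4 ^ (n + 1) ∧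
    (peano (n + 2)).count 4 = 4 ^ (n + 1) - 2 ^ (n + 1) := by
  induction n with
  | zero => decide
  | succ n ih =>
    obtain ⟨h1, h2, h3, h4⟩ := ih
    have hm := peano_mem (n + 2)
    have hexp : peano (n + 3) = phi1 (peano (n + 2)) ++ [1] ++ peano (n + 2) ++ [2]
        ++ peano (n + 2) ++ [3] ++ phi2 (peano (n + 2)) := rfl
    have p11 : (phi1 (peano (n + 2))).count 1 = (peano (n + 2)).count 2 :=
      count_map_rev _ _ 1 2 (fun x hx => by rcases hm x hx with rfl | rfl | rfl | rfl <;> decide)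
    have p12 : (phi1 (peano (n + 2))).count 2 = (peano (n + 2)).count 3 :=
      count_map_rev _ _ 2 3 (fun x hx => by rcases hm x hx with rfl | rfl | rfl | rfl <;> decide)
    have p13 : (phi1 (peano (n + 2))).count 3 = (peano (n + 2)).count 4 :=
      count_map_rev _ _ 3 4 (fun x hx => by rcases hm x hx with rfl | rfl | rfl | rfl <;> decide)
    have p14 : (phi1 (peano (n + 2))).count 4 = (peano (n + 2)).count 1 :=
      count_map_rev _ _ 4 1 (fun x hx => by rcases hm x hx with rfl | rfl | rfl | rfl <;> decide)
    have p21 : (phi2 (peano (n + 2))).count 1 = (peano (n + 2)).count 4 :=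
      count_map_rev _ _ 1 4 (fun x hx => by rcases hm x hx with rfl | rfl | rfl | rfl <;> decide)
    have p22 : (phi2 (peano (n + 2))).count 2 = (peano (n + 2)).count 1 :=
      count_map_rev _ _ 2 1 (fun x hx => by rcases hm x hx with rfl | rfl | rfl | rfl <;> decide)
    have p23 : (phi2 (peano (n + 2))).count 3 = (peano (n + 2)).count 2 :=
      count_map_rev _ _ 3 2 (fun x hx => by rcases hm x hx with rfl | rfl | rfl | rfl <;> decide)
    have p24 : (phi2 (peano (n + 2))).count 4 = (peano (n + 2)).count 3 :=
      count_map_rev _ _ 4 3 (fun x hx => by rcases hm x hx with rfl | rfl | rfl | rfl <;> decide)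
    have hHpos : 1 ≤ (2 : ℕ) ^ (n + 1) := Nat.one_le_two_pow
    have hHQ : (2 : ℕ) ^ (n + 1) ≤ 4 ^ (n + 1) := Nat.pow_le_pow_left (by norm_num) _
    have hQ : (4 : ℕ) ^ (n + 2) = 4 * 4 ^ (n + 1) := by ring
    have hH : (2 : ℕ) ^ (n + 2) = 2 * 2 ^ (n + 1) := by ring
    refine ⟨?_, ?_, ?_, ?_⟩ <;>
      simp only [show n + 1 + 2 = n + 3 from rfl, hexp, List.count_append] <;>
      rw [show n + 1 + 1 = n + 2 from rfl] <;>
      simp only [p11, p12, p13, p14, p21, p22, p23, p24, h1, h2, h3, h4,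
        List.count_singleton', List.count_cons, List.count_nil] <;>
      norm_num <;> omega

lemma peano_head_last (m : ℕ) :
    (peano (m + 1)).head? = some (if m % 2 = 0 then 1 else 2) ∧
    (peano (m + 1)).getLast? = some (if m % 2 = 0 then 3 else 2) := by
  induction m with
  | zero => constructor <;> rfl
  | succ m ih =>
    obtain ⟨ihh, ihl⟩ := ih
    have e1 : (phi1 (peano (m + 1))).head? = some (if m % 2 = 0 then 2 else 1) := by
      rw [phi1, List.head?_map, List.head?_reverse, ihl]
      rcases Nat.mod_two_eq_zero_or_one m with h | h <;> simp [h]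
    have e2 : (phi2 (peano (m + 1))).getLast? = some (if m % 2 = 0 then 2 else 3) := by
      have hrev : phi2 (peano (m + 1)) =
          (List.map (fun x => if x = 4 then 1 else x + 1) (peano (m + 1))).reverse := by
        rw [phi2, List.map_reverse]
      rw [hrev, List.getLast?_reverse, List.head?_map, ihh]
      rcases Nat.mod_two_eq_zero_or_one m with h | h <;> simp [h]
    have hexp : peano (m + 2) = phi1 (peano (m + 1)) ++ [1] ++ peano (m + 1) ++ [2]
        ++ peano (m + 1) ++ [3] ++ phi2 (peano (m + 1)) := rfl
    constructor
    · rw [show m + 1 + 1 = m + 2 from rfl, hexp]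
      simp only [List.head?_append, e1, Option.or]
      rcases Nat.mod_two_eq_zero_or_one m with h | h <;> simp [Nat.add_mod, h]
    · rw [show m + 1 + 1 = m + 2 from rfl, hexp]
      simp only [List.getLast?_append, e2, Option.or]
      rcases Nat.mod_two_eq_zero_or_one m with h | h <;> simp [Nat.add_mod, h]

lemma peano_ne_nil (n : ℕ) : peano (n + 1) ≠ [] := by
  intro h
  have := (peano_head_last n).1
  rw [h] at this
  simp at this

lemma count_card (w : List ℕ) (a : ℕ) :
    (Finset.univ.filter (fun i : Fin w.length => w.get i = a)).card = w.count a := by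
  have h := Fin.card_filter_univ_eq_vector_get_eq_count a (⟨w, rfl⟩ : List.Vector ℕ w.length)
  exact h

lemma pat12_eq (w : List ℕ) (hw : 0 < w.length) (h0 : w.get ⟨0, hw⟩ = 1)
    (hmem : ∀ x ∈ w, x = 1 ∨ x = 2 ∨ x = 3 ∨ x = 4) (ℓ : ℕ) (hℓ : 1 ≤ ℓ) :
    pat12Count w ℓ = Nat.choose (w.count 2) ℓ + Nat.choose (w.count 3) ℓ
      + Nat.choose (w.count 4) ℓ := by
  have hhead : w.headI = 1 := by
    cases w with
    | nil => simp at hw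
    | cons a t => exact h0
  set S : ℕ → Finset (Fin w.length) :=
    fun a => Finset.univ.filter (fun i => w.get i = a) with hS
  have hScard : ∀ a, (S a).card = w.count a := fun a => count_card w a
  have back : ∀ (a : ℕ) (s : Finset (Fin w.length)), 2 ≤ a → a ≤ 4 → s ⊆ S a → s.card = ℓ →
      s.card = ℓ ∧ (∀ i ∈ s, 0 < (i : ℕ)) ∧ (∀ i ∈ s, ∀ j ∈ s, w.get i = w.get j) ∧
        ∀ i ∈ s, w.headI < w.get i := by
    intro a s ha2 ha4 hsub hcard
    have hval : ∀ i ∈ s, w.get i = a := by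
      intro i hi
      have := hsub hi
      simp only [hS, Finset.mem_filter] at this
      exact this.2
    refine ⟨hcard, ?_, ?_, ?_⟩
    · intro i hi
      by_contra h
      have : i = ⟨0, hw⟩ := Fin.ext (show (i : ℕ) = 0 by omega)
      rw [this] at hi
      have := hval _ hi
      rw [h0] at this
      omega
    · intro i hi j hj; rw [hval i hi, hval j hj]
    · intro i hi; rw [hhead, hval i hi]; omega
  have key : (Finset.univ.filter (fun s : Finset (Fin w.length) =>
      s.card = ℓ ∧ (∀ i ∈ s, 0 < (i : ℕ)) ∧ (∀ i ∈ s, ∀ j ∈ s, w.get i = w.get j) ∧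
        ∀ i ∈ s, w.headI < w.get i)) =
      (Finset.powersetCard ℓ (S 2) ∪ Finset.powersetCard ℓ (S 3)) ∪
        Finset.powersetCard ℓ (S 4) := by
    ext s
    simp only [Finset.mem_filter, Finset.mem_univ, true_and, Finset.mem_union,
      Finset.mem_powersetCard]
    constructor
    · rintro ⟨hcard, hpos, hconst, hgt⟩
      obtain ⟨i₀, hi₀⟩ := Finset.card_pos.mp (by rw [hcard]; omega)
      have hval := hmem (w.get i₀) (w.get_mem _)
      have hgt' := hgt i₀ hi₀
      rw [hhead] at hgt'
      have hsub : ∀ a : ℕ, w.get i₀ = a → s ⊆ S a := by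
        intro a ha j hj
        simp only [hS, Finset.mem_filter, Finset.mem_univ, true_and]
        rw [← ha]
        exact hconst j hj i₀ hi₀
      rcases hval with h | h | h | h
      · omega
      · exact Or.inl (Or.inl ⟨hsub 2 h, hcard⟩)
      · exact Or.inl (Or.inr ⟨hsub 3 h, hcard⟩)
      · exact Or.inr ⟨hsub 4 h, hcard⟩
    · rintro ((⟨hsub, hcard⟩ | ⟨hsub, hcard⟩) | ⟨hsub, hcard⟩)
      · exact back 2 s (by norm_num) (by norm_num) hsub hcard
      · exact back 3 s (by norm_num) (by norm_num) hsub hcard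
      · exact back 4 s (by norm_num) (by norm_num) hsub hcard
  have hdisj : ∀ a b : ℕ, a ≠ b →
      Disjoint (Finset.powersetCard ℓ (S a)) (Finset.powersetCard ℓ (S b)) := by
    intro a b hab
    rw [Finset.disjoint_left]
    intro s hsa hsb
    rw [Finset.mem_powersetCard] at hsa hsb
    obtain ⟨i, hi⟩ := Finset.card_pos.mp (by rw [hsa.2]; omega)
    have h1 := hsa.1 hi
    have h2 := hsb.1 hi
    simp only [hS, Finset.mem_filter] at h1 h2
    exact hab (h1.2 ▸ h2.2)
  rw [pat12Count, key, Finset.card_union_of_disjoint, Finset.card_union_of_disjoint,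
    Finset.card_powersetCard, Finset.card_powersetCard, Finset.card_powersetCard,
    hScard, hScard, hScard]
  · exact hdisj 2 3 (by norm_num)
  · rw [Finset.disjoint_union_left]
    exact ⟨hdisj 2 4 (by norm_num), hdisj 3 4 (by norm_num)⟩

theorem peano_pat12_odd (k ℓ : ℕ) (hℓ : 1 ≤ ℓ) :
    pat12Count (peano (2 * k + 1)) ℓ =
      Nat.choose (4 ^ (2 * k) - 2 ^ (2 * k)) ℓ + Nat.choose (4 ^ (2 * k)) ℓ
        + Nat.choose (4 ^ (2 * k) + 2 ^ (2 * k) - 1) ℓ := by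
  have hw : 0 < (peano (2 * k + 1)).length := List.length_pos_iff.mpr (peano_ne_nil (2 * k))
  have h0 : (peano (2 * k + 1)).get ⟨0, hw⟩ = 1 := by
    have hh := (peano_head_last (2 * k)).1
    rw [Nat.mul_mod_right] at hh
    simp only [if_pos rfl] at hh
    revert hw hh
    cases peano (2 * k + 1) with
    | nil => intro hw; simp at hw
    | cons a t => intro hw hh; simpa using hh
  have heq := pat12_eq _ hw h0 (peano_mem _) ℓ hℓ
  cases k with
  | zero =>
    rw [heq]
    have c2 : (peano (2 * 0 + 1)).count 2 = 1 := rfl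
    have c3 : (peano (2 * 0 + 1)).count 3 = 1 := rfl
    have c4 : (peano (2 * 0 + 1)).count 4 = 0 := rfl
    rw [c2, c3, c4]
    ring_nf
  | succ k =>
    obtain ⟨h1, h2, h3, h4⟩ := peano_counts (2 * k + 1)
    have hidx : 2 * (k + 1) + 1 = 2 * k + 1 + 2 := by ring
    have hexp : 2 * (k + 1) = 2 * k + 1 + 1 := by ring
    rw [hidx] at heq
    rw [hexp, show 2 * k + 1 + 1 + 1 = 2 * k + 1 + 2 from rfl, heq, h2, h3, h4]
    ring_nf
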